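/- Suppose a_p ≠ 0, let λ ∈ ℂ, and suppose the polynomial P_p(·; λ) has p distinct roots z_1, …, z_p in ℂ, none of which equals 2 or −2. For each r = 1, …, p choose y_r ∈ ℂ \ {0} with y_r + y_r^{−1} = z_r (so y_r ≠ ±1). Then a sequence v : ℤ → ℂ satisfies (L_p v)_j + λ v_j = 0 for all j ∈ ℤ if and only if v is a linear combination of the 2p sequences (y_r^j)_{j∈ℤ} and (y_r^{−j})_{j∈ℤ}, r = 1, …, p. -/

import Mathlib

/-- Coefficients `b_r(λ)` of the characteristic polynomial `P_p(·;λ)` associated with the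
symmetric finite difference stencil `a`. -/
noncomputable def bcoef (p : ℕ) (a : ℤ → ℝ) (lam : ℂ) (r : ℕ) : ℂ :=
  if r = 0 then
    ((a 0 : ℂ) + lam) + 2 * ∑ l ∈ Finset.Icc 1 (p / 2), (-1 : ℂ) ^ l * (a (2 * l) : ℂ)
  else if r % 2 = 0 then
    ∑ l ∈ Finset.Icc (r / 2) (p / 2),
      (-1 : ℂ) ^ (l - r / 2) * (Nat.choose (l + r / 2 - 1) (2 * (r / 2) - 1) : ℂ) *
        ((l : ℂ) / ((r / 2 : ℕ) : ℂ)) * (a (2 * l) : ℂ)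
  else
    ∑ l ∈ Finset.Icc (r / 2) ((p + 1) / 2 - 1),
      (-1 : ℂ) ^ (l - r / 2) * (Nat.choose (l + r / 2) (2 * (r / 2)) : ℂ) *
        ((2 * (l : ℂ) + 1) / (2 * ((r / 2 : ℕ) : ℂ) + 1)) * (a (2 * l + 1) : ℂ)

/-- The polynomial `P_p(z;λ) = Σ_{r=0}^p b_r(λ) z^r`. -/
noncomputable def Ppoly (p : ℕ) (a : ℤ → ℝ) (lam z : ℂ) : ℂ :=
  ∑ r ∈ Finset.range (p + 1), bcoef p a lam r * z ^ r

open Finset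

noncomputable def cheb : ℕ → ℂ → ℂ
  | 0, _ => 2
  | 1, z => z
  | (n+2), z => z * cheb (n+1) z - cheb n z

def eD (L k : ℕ) : ℕ := (L + k).choose (2*k) + (L + k - 1).choose (2*k)
def oD (L k : ℕ) : ℕ := (L + k + 1).choose (2*k+1) + (L + k).choose (2*k+1)

lemma cheb_mul_pow (y : ℂ) (hy : y ≠ 0) : ∀ n : ℕ, cheb n (y + y⁻¹) * y^n = y^(2*n) + 1 := by
  have key : ∀ n : ℕ, cheb n (y + y⁻¹) * y^n = y^(2*n) + 1 ∧
      cheb (n+1) (y + y⁻¹) * y^(n+1) = y^(2*(n+1)) + 1 := by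
    intro n
    induction n with
    | zero =>
      constructor
      · norm_num [cheb]
      · show (y + y⁻¹) * y ^ 1 = _
        field_simp
    | succ n ih =>
      refine ⟨ih.2, ?_⟩
      have h1 := ih.1
      have h2 := ih.2
      have hstep : cheb (n+2) (y + y⁻¹) * y^(n+2)
          = (y + y⁻¹) * y * (cheb (n+1) (y+y⁻¹) * y^(n+1)) - y^2 * (cheb n (y+y⁻¹) * y^n) := by
        show (_ * cheb (n+1) _ - cheb n _) * _ = _
        ring
      have hy2 : (y + y⁻¹) * y = y^2 + 1 := by
        field_simp
      rw [hstep, h1, h2, hy2]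
      ring
  exact fun n => (key n).1

lemma cheb_eval (y : ℂ) (hy : y ≠ 0) (n : ℕ) :
    cheb n (y + y⁻¹) = y^(n:ℤ) + y^(-(n:ℤ)) := by
  have h := cheb_mul_pow y hy n
  have hyn : y^n ≠ 0 := pow_ne_zero _ hy
  have h2 : (y^(n:ℤ) + y^(-(n:ℤ))) * y^n = y^(2*n) + 1 := by
    rw [zpow_neg, zpow_natCast, add_mul, inv_mul_cancel₀ hyn, two_mul, pow_add]
  exact mul_right_cancel₀ hyn (h.trans h2.symm)

lemma sum_range_pair (f : ℕ → ℂ) (n : ℕ) :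
    ∑ i ∈ range (2*n), f i = ∑ k ∈ range n, (f (2*k) + f (2*k+1)) := by
  induction n with
  | zero => simp
  | succ n ih =>
    have h : 2*(n+1) = (2*n+1)+1 := by ring
    rw [h, sum_range_succ, sum_range_succ, ih, sum_range_succ]
    ring

lemma eD_zero (L : ℕ) : eD L 0 = 2 := by simp [eD]

lemma eD_top (L : ℕ) : eD L (L+1) = 0 := by
  have h1 : (L+(L+1)).choose (2*(L+1)) = 0 := Nat.choose_eq_zero_of_lt (by omega)
  have h2 : (L+(L+1)-1).choose (2*(L+1)) = 0 := Nat.choose_eq_zero_of_lt (by omega)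
  simp only [eD, h1, h2]

lemma oD_top (L : ℕ) : oD L (L+1) = 0 := by
  have h1 : (L+(L+1)+1).choose (2*(L+1)+1) = 0 := Nat.choose_eq_zero_of_lt (by omega)
  have h2 : (L+(L+1)).choose (2*(L+1)+1) = 0 := Nat.choose_eq_zero_of_lt (by omega)
  simp only [oD, h1, h2]

lemma oD_rec (L k : ℕ) : oD (L+1) k = eD (L+1) k + oD L k := by
  have p1 : (L+k+2).choose (2*k+1) = (L+k+1).choose (2*k) + (L+k+1).choose (2*k+1) :=
    Nat.choose_succ_succ (L+k+1) (2*k)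
  have p2 : (L+k+1).choose (2*k+1) = (L+k).choose (2*k) + (L+k).choose (2*k+1) :=
    Nat.choose_succ_succ (L+k) (2*k)
  simp only [oD, eD, show L+1+k+1 = L+k+2 from by ring, show L+1+k = L+k+1 from by ring,
    show L+k+1+1 = L+k+2 from by ring, Nat.add_sub_cancel]
  omega

lemma eD_rec (L k : ℕ) : eD (L+1) (k+1) = oD L k + eD L (k+1) := by
  have p1 : (L+k+2).choose (2*k+2) = (L+k+1).choose (2*k+1) + (L+k+1).choose (2*k+2) :=
    Nat.choose_succ_succ (L+k+1) (2*k+1)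
  have p2 : (L+k+1).choose (2*k+2) = (L+k).choose (2*k+1) + (L+k).choose (2*k+2) :=
    Nat.choose_succ_succ (L+k) (2*k+1)
  simp only [oD, eD, show L+1+(k+1) = L+k+2 from by ring, show L+(k+1) = L+k+1 from by ring,
    show 2*(k+1) = 2*k+2 from by ring, show L+k+2-1 = L+k+1 from rfl,
    show L+k+1+1 = L+k+2 from by ring, Nat.add_sub_cancel]
  omega

lemma chebC (Z : ℂ) : ∀ L : ℕ,
    (-1:ℂ)^L * cheb (2*L) Z = ∑ k ∈ range (L+1), (-1:ℂ)^k * (eD L k : ℂ) * Z^(2*k) ∧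
    (-1:ℂ)^L * cheb (2*L+1) Z = ∑ k ∈ range (L+1), (-1:ℂ)^k * (oD L k : ℂ) * Z^(2*k+1) := by
  intro L
  induction L with
  | zero =>
    constructor
    · norm_num [cheb, eD]
    · norm_num [cheb, oD]
  | succ L ih =>
    have heven : (-1:ℂ)^(L+1) * cheb (2*(L+1)) Z
        = ∑ k ∈ range (L+2), (-1:ℂ)^k * (eD (L+1) k : ℂ) * Z^(2*k) := by
      have hc : cheb (2*(L+1)) Z = Z * cheb (2*L+1) Z - cheb (2*L) Z := by
        show cheb (2*L+2) Z = _
        rfl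
      rw [hc]
      have e1 : (-1:ℂ)^(L+1) * (Z * cheb (2*L+1) Z - cheb (2*L) Z)
          = -Z * ((-1:ℂ)^L * cheb (2*L+1) Z) + (-1:ℂ)^L * cheb (2*L) Z := by ring
      rw [e1, ih.1, ih.2]
      rw [Finset.sum_range_succ' (fun k => (-1:ℂ)^k * (eD (L+1) k : ℂ) * Z^(2*k)) (L+1)]
      rw [Finset.mul_sum]
      have key : ∀ k ∈ range (L+1),
          -Z * ((-1:ℂ)^k * (oD L k : ℂ) * Z^(2*k+1))
          = (-1:ℂ)^(k+1) * (eD (L+1) (k+1) : ℂ) * Z^(2*(k+1))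
            - (-1:ℂ)^(k+1) * (eD L (k+1) : ℂ) * Z^(2*(k+1)) := by
        intro k _
        rw [eD_rec]
        push_cast
        ring
      rw [Finset.sum_congr rfl key, Finset.sum_sub_distrib]
      have h2 : ∑ k ∈ range (L+1), (-1:ℂ)^(k+1) * (eD L (k+1) : ℂ) * Z^(2*(k+1))
          = ∑ k ∈ range (L+1), (-1:ℂ)^k * (eD L k : ℂ) * Z^(2*k) - (eD L 0 : ℂ) := by
        rw [Finset.sum_range_succ' (fun k => (-1:ℂ)^k * (eD L k : ℂ) * Z^(2*k)) L]
        rw [Finset.sum_range_succ]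
        simp [eD_top]
      rw [h2]
      simp [eD_zero]
      ring
    refine ⟨heven, ?_⟩
    have hc : cheb (2*(L+1)+1) Z = Z * cheb (2*(L+1)) Z - cheb (2*L+1) Z := by
      show cheb (2*L+3) Z = Z * cheb (2*L+2) Z - cheb (2*L+1) Z
      rfl
    rw [hc]
    have e1 : (-1:ℂ)^(L+1) * (Z * cheb (2*(L+1)) Z - cheb (2*L+1) Z)
        = Z * ((-1:ℂ)^(L+1) * cheb (2*(L+1)) Z) + (-1:ℂ)^L * cheb (2*L+1) Z := by ring
    rw [e1, heven, ih.2, Finset.mul_sum]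
    have key : ∀ k ∈ range (L+2),
        Z * ((-1:ℂ)^k * (eD (L+1) k : ℂ) * Z^(2*k))
        = (-1:ℂ)^k * (oD (L+1) k : ℂ) * Z^(2*k+1) - (-1:ℂ)^k * (oD L k : ℂ) * Z^(2*k+1) := by
      intro k _
      have := oD_rec L k
      have : (oD (L+1) k : ℂ) = (eD (L+1) k : ℂ) + (oD L k : ℂ) := by
        rw [oD_rec]; push_cast; ring
      rw [this]
      ring
    rw [Finset.sum_congr rfl key, Finset.sum_sub_distrib]
    have h2 : ∑ k ∈ range (L+2), (-1:ℂ)^k * (oD L k : ℂ) * Z^(2*k+1)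
        = ∑ k ∈ range (L+1), (-1:ℂ)^k * (oD L k : ℂ) * Z^(2*k+1) := by
      rw [Finset.sum_range_succ]
      simp [oD_top]
    rw [h2]
    ring

lemma E1nat (l k : ℕ) (hk : 1 ≤ k) (hkl : k ≤ l) :
    l * (l+k-1).choose (2*k-1) = k * eD l k := by
  obtain ⟨k, rfl⟩ : ∃ m, k = m + 1 := ⟨k-1, by omega⟩
  have e1 : l + (k+1) - 1 = l + k := by omega
  have e2 : 2*(k+1) - 1 = 2*k+1 := by omega
  rw [e1, e2]
  have pas : (l+k+1).choose (2*k+2) = (l+k).choose (2*k+1) + (l+k).choose (2*k+2) :=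
    Nat.choose_succ_succ (l+k) (2*k+1)
  have csr : (l+k).choose (2*k+2) * (2*k+2) = (l+k).choose (2*k+1) * (l+k - (2*k+1)) :=
    Nat.choose_succ_right_eq (l+k) (2*k+1)
  have e3 : l + k - (2*k+1) = l - (k+1) := by omega
  rw [e3] at csr
  have heD : eD l (k+1) = (l+(k+1)).choose (2*(k+1)) + (l+(k+1)-1).choose (2*(k+1)) := rfl
  have e4 : l + (k+1) = l+k+1 := by ring
  have e5 : l + (k+1) - 1 = l + k := by omega
  have e6 : 2*(k+1) = 2*k+2 := by ring
  rw [e5, e4, e6] at heD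
  rw [heD, pas]
  -- goal : l * C(l+k, 2k+1) = (k+1) * (C(l+k,2k+1) + C(l+k,2k+2) + C(l+k,2k+2))
  -- use csr : C(l+k,2k+2)*(2k+2) = C(l+k,2k+1)*(l-(k+1))
  have hl : l = (k+1) + (l - (k+1)) := by omega
  nlinarith [csr]

lemma E2nat (l k : ℕ) (hkl : k ≤ l) :
    (2*l+1) * (l+k).choose (2*k) = (2*k+1) * oD l k := by
  have pas : (l+k+1).choose (2*k+1) = (l+k).choose (2*k) + (l+k).choose (2*k+1) :=
    Nat.choose_succ_succ (l+k) (2*k)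
  have csr : (l+k).choose (2*k+1) * (2*k+1) = (l+k).choose (2*k) * (l+k - 2*k) :=
    Nat.choose_succ_right_eq (l+k) (2*k)
  have e3 : l + k - 2*k = l - k := by omega
  rw [e3] at csr
  have hoD : oD l k = (l+k+1).choose (2*k+1) + (l+k).choose (2*k+1) := rfl
  rw [hoD, pas]
  have hl : l = k + (l - k) := by omega
  nlinarith [csr]

lemma E1 (l k : ℕ) (hk : 1 ≤ k) (hkl : k ≤ l) :
    ((l:ℂ) / (k:ℂ)) * ((l+k-1).choose (2*k-1) : ℂ) = (eD l k : ℂ) := by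
  have hk0 : (k:ℂ) ≠ 0 := Nat.cast_ne_zero.mpr (by omega)
  rw [div_mul_eq_mul_div, div_eq_iff hk0]
  have hnat := E1nat l k hk hkl
  have hc : ((l:ℂ)) * ((l+k-1).choose (2*k-1) : ℂ) = (k:ℂ) * (eD l k : ℂ) := by
    exact_mod_cast congrArg (Nat.cast : ℕ → ℂ) hnat
  linear_combination hc

lemma E2 (l k : ℕ) (hkl : k ≤ l) :
    ((2*(l:ℂ)+1) / (2*(k:ℂ)+1)) * ((l+k).choose (2*k) : ℂ) = (oD l k : ℂ) := by
  have hk0 : (2*(k:ℂ)+1) ≠ 0 := by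
    intro hcon
    have : (2*(k:ℂ)+1) = ((2*k+1 : ℕ) : ℂ) := by push_cast; ring
    rw [this] at hcon
    exact (Nat.cast_ne_zero.mpr (by omega)) hcon
  rw [div_mul_eq_mul_div, div_eq_iff hk0]
  have hnat := E2nat l k hkl
  have hc := congrArg (Nat.cast : ℕ → ℂ) hnat
  push_cast at hc
  push_cast
  linear_combination hc

lemma neg_one_pow_sub (L k : ℕ) (hk : k ≤ L) : ((-1:ℂ))^(L-k) = (-1)^L * (-1)^k := by
  have h : L - k + 2*k = L + k := by omega
  calc ((-1:ℂ))^(L-k) = (-1)^(L-k) * ((-1)^2)^k := by norm_num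
  _ = (-1:ℂ)^(L-k+2*k) := by rw [← pow_mul, ← pow_add]
  _ = (-1:ℂ)^(L+k) := by rw [h]
  _ = (-1:ℂ)^L * (-1)^k := by rw [pow_add]

lemma bcoef_top (p : ℕ) (hp : 1 ≤ p) (a : ℤ → ℝ) (lam : ℂ) : bcoef p a lam (p+1) = 0 := by
  rcases Nat.even_or_odd p with hE | hO
  · -- p even = 2M, M ≥ 1, p+1 odd
    obtain ⟨M, hM⟩ := hE
    have hp2 : p = 2*M := by omega
    subst hp2
    have hM1 : 1 ≤ M := by omega
    have h0 : ¬ (2*M+1 = 0) := by omega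
    have h1 : ¬ ((2*M+1) % 2 = 0) := by omega
    have h2 : (2*M+1)/2 = M := by omega
    simp only [bcoef, if_neg h0, if_neg h1, h2]
    rw [Finset.Icc_eq_empty (by omega), Finset.sum_empty]
  · -- p odd = 2M+1, p+1 even
    obtain ⟨M, hM⟩ := hO
    subst hM
    have h0 : ¬ (2*M+1+1 = 0) := by omega
    have h1 : (2*M+1+1) % 2 = 0 := by omega
    have h2 : (2*M+1+1)/2 = M+1 := by omega
    simp only [bcoef, if_neg h0, if_pos h1, h2]
    rw [show (2*M+1)/2 = M from by omega, Finset.Icc_eq_empty (by omega), Finset.sum_empty]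

lemma Ppoly_succ (a : ℤ → ℝ) (lam : ℂ) (p : ℕ) (hp : 1 ≤ p) (Z : ℂ) :
    Ppoly (p+1) a lam Z = Ppoly p a lam Z + ((a ((p:ℤ)+1)) : ℂ) * cheb (p+1) Z := by
  have hext : Ppoly p a lam Z = ∑ r ∈ Finset.range (p+2), bcoef p a lam r * Z^r := by
    show _ = ∑ r ∈ Finset.range ((p+1)+1), _
    rw [Finset.sum_range_succ, bcoef_top p hp]
    simp [Ppoly]
  have key : ∑ r ∈ Finset.range (p+2), (bcoef (p+1) a lam r - bcoef p a lam r) * Z^r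
      = ((a ((p:ℤ)+1)) : ℂ) * cheb (p+1) Z := by
    rcases Nat.even_or_odd p with hE | hO
    · -- p even, p = 2N+2
      obtain ⟨M, hM⟩ := hE
      obtain ⟨N, hN⟩ : ∃ N, M = N + 1 := ⟨M-1, by omega⟩
      have hpN : p = 2*N+2 := by omega
      subst hpN
      have heven : ∀ r, r % 2 = 0 →
          bcoef (2*N+2+1) a lam r - bcoef (2*N+2) a lam r = 0 := by
        intro r hr
        have h2a : (2*N+2+1)/2 = N+1 := by omega
        have h2b : (2*N+2)/2 = N+1 := by omega
        rcases Nat.eq_zero_or_pos r with rfl | hr0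
        · simp [bcoef, h2a, h2b]
        · simp [bcoef, hr, (by omega : ¬ r = 0), h2a, h2b]
      have hodd : ∀ k, k ≤ N+1 →
          bcoef (2*N+2+1) a lam (2*k+1) - bcoef (2*N+2) a lam (2*k+1)
          = (-1:ℂ)^(N+1-k) * ((oD (N+1) k : ℕ) : ℂ) * ((a (2 * ((N+1 : ℕ) : ℤ) + 1)) : ℂ) := by
        intro k hk
        have h0 : ¬(2*k+1 = 0) := by omega
        have h1 : ¬((2*k+1) % 2 = 0) := by omega
        have h2 : (2*k+1)/2 = k := by omega
        have h3 : (2*N+2+1+1)/2 - 1 = N+1 := by omega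
        have h4 : (2*N+2+1)/2 - 1 = N := by omega
        simp only [bcoef, if_neg h0, if_neg h1, h2, h3, h4]
        rw [Finset.sum_Icc_succ_top (show k ≤ N+1 from hk)]
        have hE2 := E2 (N+1) k (by omega)
        push_cast at hE2 ⊢
        linear_combination ((-1:ℂ)^(N+1-k) * ((a (2 * ((N:ℤ)+1) + 1)) : ℂ)) * hE2
      rw [show 2*N+2+2 = 2*(N+2) from by ring]
      rw [sum_range_pair (fun r => (bcoef (2*N+2+1) a lam r - bcoef (2*N+2) a lam r) * Z^r) (N+2)]
      have hcong : ∀ k ∈ Finset.range (N+2),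
          ((bcoef (2*N+2+1) a lam (2*k) - bcoef (2*N+2) a lam (2*k)) * Z^(2*k)
            + (bcoef (2*N+2+1) a lam (2*k+1) - bcoef (2*N+2) a lam (2*k+1)) * Z^(2*k+1))
          = ((a (2 * ((N+1 : ℕ) : ℤ) + 1)) : ℂ) * (-1:ℂ)^(N+1)
              * ((-1:ℂ)^k * ((oD (N+1) k : ℕ) : ℂ) * Z^(2*k+1)) := by
        intro k hkmem
        have hk : k ≤ N+1 := by
          have := Finset.mem_range.mp hkmem; omega
        rw [heven (2*k) (by omega), hodd k hk, neg_one_pow_sub (N+1) k hk]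
        ring
      rw [Finset.sum_congr rfl hcong, ← Finset.mul_sum,
        show N+2 = N+1+1 from by omega, ← (chebC Z (N+1)).2]
      have hnn : ((-1:ℂ))^(N+1) * (-1:ℂ)^(N+1) = 1 := by
        rw [← pow_add, show (N+1)+(N+1) = 2*(N+1) from by ring, pow_mul]
        norm_num
      rw [show ((2*N+2 : ℕ):ℤ)+1 = 2*((N+1:ℕ):ℤ)+1 from by push_cast; ring,
          show 2*N+2+1 = 2*(N+1)+1 from by ring]
      linear_combination (((a (2 * ((N+1 : ℕ) : ℤ) + 1)) : ℂ) * cheb (2*(N+1)+1) Z) * hnn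
    · -- p odd = 2M+1
      obtain ⟨M, hM⟩ := hO
      subst hM
      have hoddz : ∀ r, ¬ (r % 2 = 0) →
          bcoef (2*M+1+1) a lam r - bcoef (2*M+1) a lam r = 0 := by
        intro r hr
        have h3 : (2*M+1+1+1)/2 - 1 = M := by omega
        have h4 : (2*M+1+1)/2 - 1 = M := by omega
        simp only [bcoef, if_neg (by omega : ¬ r = 0), if_neg hr, h3, h4, sub_self]
      have heven : ∀ k, k ≤ M+1 →
          bcoef (2*M+1+1) a lam (2*k) - bcoef (2*M+1) a lam (2*k)
          = (-1:ℂ)^(M+1-k) * ((eD (M+1) k : ℕ) : ℂ) * ((a (2 * ((M+1 : ℕ) : ℤ))) : ℂ) := by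
        intro k hk
        have h2a : (2*M+1+1)/2 = M+1 := by omega
        have h2b : (2*M+1)/2 = M := by omega
        rcases Nat.eq_zero_or_pos k with rfl | hk0
        · simp only [bcoef, mul_zero, if_pos rfl, h2a, h2b]
          rw [Finset.sum_Icc_succ_top (show 1 ≤ M+1 from by omega)]
          rw [eD_zero]
          push_cast
          ring
        · have h0 : ¬(2*k = 0) := by omega
          have h1 : (2*k) % 2 = 0 := by omega
          have h2 : (2*k)/2 = k := by omega
          simp only [bcoef, if_neg h0, if_pos h1, h2, h2a, h2b]
          rw [Finset.sum_Icc_succ_top (show k ≤ M+1 from hk)]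
          have hE1 := E1 (M+1) k hk0 hk
          push_cast at hE1 ⊢
          linear_combination ((-1:ℂ)^(M+1-k) * ((a (2 * ((M:ℤ)+1))) : ℂ)) * hE1
      rw [show 2*M+1+2 = 2*(M+1)+1 from by ring, Finset.sum_range_succ,
        sum_range_pair (fun r => (bcoef (2*M+1+1) a lam r - bcoef (2*M+1) a lam r) * Z^r) (M+1)]
      have hcong : ∀ k ∈ Finset.range (M+1),
          ((bcoef (2*M+1+1) a lam (2*k) - bcoef (2*M+1) a lam (2*k)) * Z^(2*k)
            + (bcoef (2*M+1+1) a lam (2*k+1) - bcoef (2*M+1) a lam (2*k+1)) * Z^(2*k+1))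
          = ((a (2 * ((M+1 : ℕ) : ℤ))) : ℂ) * (-1:ℂ)^(M+1)
              * ((-1:ℂ)^k * ((eD (M+1) k : ℕ) : ℂ) * Z^(2*k)) := by
        intro k hkmem
        have hk : k ≤ M+1 := by
          have := Finset.mem_range.mp hkmem; omega
        rw [hoddz (2*k+1) (by omega), heven k hk, neg_one_pow_sub (M+1) k hk]
        ring
      rw [Finset.sum_congr rfl hcong, ← Finset.mul_sum]
      rw [heven (M+1) (le_refl _)]
      have hnn : ((-1:ℂ))^(M+1) * (-1:ℂ)^(M+1) = 1 := by
        rw [← pow_add, show (M+1)+(M+1) = 2*(M+1) from by ring, pow_mul]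
        norm_num
      have hch := (chebC Z (M+1)).1
      rw [show M+1+1 = M+2 from by omega, Finset.sum_range_succ] at hch
      have hsub : M+1 - (M+1) = 0 := by omega
      rw [hsub, pow_zero, one_mul]
      rw [show ((2*M+1 : ℕ):ℤ)+1 = 2*((M+1:ℕ):ℤ) from by push_cast; ring,
          show 2*M+1+1 = 2*(M+1) from by ring]
      linear_combination (((a (2 * ((M+1 : ℕ) : ℤ))) : ℂ) * (-1:ℂ)^M) * hch
        + (((a (2 * ((M+1 : ℕ) : ℤ))) : ℂ) * cheb (2*(M+1)) Z
            - ((a (2 * ((M+1 : ℕ) : ℤ))) : ℂ) * ((eD (M+1) (M+1) : ℕ) : ℂ) * Z^(2*(M+1))) * hnn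
  calc Ppoly (p+1) a lam Z
      = ∑ r ∈ Finset.range (p+2), ((bcoef (p+1) a lam r - bcoef p a lam r) * Z^r
          + bcoef p a lam r * Z^r) := by
        rw [Ppoly]
        exact Finset.sum_congr rfl (fun r _ => by ring)
    _ = _ := by rw [Finset.sum_add_distrib, key, hext]; ring

lemma lemA (a : ℤ → ℝ) (hsym : ∀ r : ℤ, a (-r) = a r) (lam : ℂ) :
    ∀ p : ℕ, 1 ≤ p → ∀ y : ℂ, y ≠ 0 →
      Ppoly p a lam (y + y⁻¹) = lam + ∑ t ∈ Finset.Icc (-(p:ℤ)) (p:ℤ), (a t : ℂ) * y ^ t := by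
  intro p
  induction p with
  | zero => omega
  | succ p ih =>
    intro _ y hy
    rcases Nat.eq_zero_or_pos p with rfl | hp
    · -- p+1 = 1
      have h1 : Finset.Icc (-(1:ℤ)) (1:ℤ) = {-1, 0, 1} := by decide
      rw [Ppoly]
      rw [show (0:ℕ)+1+1 = 2 from rfl]
      rw [Finset.sum_range_succ, Finset.sum_range_succ, Finset.sum_range_zero]
      have hb0 : bcoef 1 a lam 0 = (a 0 : ℂ) + lam := by
        simp [bcoef]
      have hb1 : bcoef 1 a lam 1 = (a 1 : ℂ) := by
        have h0 : ¬(1 = 0) := by omega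
        have h1 : ¬(1 % 2 = 0) := by omega
        simp only [bcoef, if_neg h0, if_neg h1]
        norm_num
      rw [hb0, hb1]
      rw [show (-((0+1 : ℕ):ℤ)) = (-1:ℤ) from by norm_num,
          show (((0+1:ℕ)):ℤ) = (1:ℤ) from by norm_num, h1]
      rw [Finset.sum_insert (by decide), Finset.sum_insert (by decide), Finset.sum_singleton]
      have hs := hsym 1
      rw [show (-1:ℤ) = -(1:ℤ) from rfl, hs]
      simp only [zpow_neg_one, zpow_zero, zpow_one]
      push_cast
      ring
    · have hstep := Ppoly_succ a lam p hp (y + y⁻¹)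
      rw [hstep, ih hp y hy, cheb_eval y hy (p+1)]
      have hins : Finset.Icc (-((p:ℤ)+1)) ((p:ℤ)+1)
          = insert (-((p:ℤ)+1)) (insert ((p:ℤ)+1) (Finset.Icc (-(p:ℤ)) (p:ℤ))) := by
        ext x
        simp only [Finset.mem_Icc, Finset.mem_insert]
        omega
      rw [show (-(((p:ℕ)+1 : ℕ) : ℤ)) = -((p:ℤ)+1) from by push_cast; ring,
          show ((((p:ℕ)+1 : ℕ)) : ℤ) = ((p:ℤ)+1) from by push_cast; ring]
      rw [hins, Finset.sum_insert (by simp only [Finset.mem_insert, Finset.mem_Icc]; omega),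
          Finset.sum_insert (by simp only [Finset.mem_Icc]; omega)]
      have hs := hsym ((p:ℤ)+1)
      rw [hs]
      push_cast
      ring

lemma geom_sol (p : ℕ) (a : ℤ → ℝ) (lam : ℂ) (u : ℂ) (hu : u ≠ 0)
    (hroot : lam + ∑ t ∈ Finset.Icc (-(p:ℤ)) (p:ℤ), (a t : ℂ) * u ^ t = 0) (j : ℤ) :
    (∑ t ∈ Finset.Icc (-(p:ℤ)) (p:ℤ), (a t : ℂ) * u ^ (j+t)) + lam * u ^ j = 0 := by
  have hc : ∀ t ∈ Finset.Icc (-(p:ℤ)) (p:ℤ),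
      (a t : ℂ) * u ^ (j+t) = (u ^ j) * ((a t : ℂ) * u ^ t) := by
    intro t _
    rw [zpow_add₀ hu]
    ring
  rw [Finset.sum_congr rfl hc, ← Finset.mul_sum]
  linear_combination (u ^ j) * hroot

lemma S_inv (p : ℕ) (a : ℤ → ℝ) (hsym : ∀ r : ℤ, a (-r) = a r) (u : ℂ) :
    ∑ t ∈ Finset.Icc (-(p:ℤ)) (p:ℤ), (a t : ℂ) * (u⁻¹) ^ t
      = ∑ t ∈ Finset.Icc (-(p:ℤ)) (p:ℤ), (a t : ℂ) * u ^ t := by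
  have h1 : ∀ t ∈ Finset.Icc (-(p:ℤ)) (p:ℤ),
      (a t : ℂ) * (u⁻¹) ^ t = (a (-t) : ℂ) * u ^ (-t) := by
    intro t _
    rw [show a (-t) = a t from hsym t, inv_zpow, ← zpow_neg]
  rw [Finset.sum_congr rfl h1]
  refine Finset.sum_bij' (fun t _ => -t) (fun t _ => -t) ?_ ?_ ?_ ?_ ?_ <;>
    intro t ht <;> (try simp only [Finset.mem_Icc] at ht ⊢) <;> first | omega | rfl | simp

lemma vanish (p : ℕ) (hp : 1 ≤ p) (a : ℤ → ℝ) (hsym : ∀ r : ℤ, a (-r) = a r)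
    (hap : a p ≠ 0) (lam : ℂ) (v : ℤ → ℂ)
    (hv : ∀ j : ℤ, (∑ t ∈ Finset.Icc (-(p:ℤ)) (p:ℤ), (a t : ℂ) * v (j + t)) + lam * v j = 0)
    (h0 : ∀ j : ℤ, -(p:ℤ) ≤ j → j ≤ (p:ℤ) - 1 → v j = 0) :
    ∀ j : ℤ, v j = 0 := by
  have hap' : ((a p : ℝ) : ℂ) ≠ 0 := Complex.ofReal_ne_zero.mpr hap
  have key : ∀ N : ℕ, ∀ j : ℤ, -(p:ℤ) - N ≤ j → j ≤ (p:ℤ) - 1 + N → v j = 0 := by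
    intro N
    induction N with
    | zero =>
      intro j h1 h2
      exact h0 j (by omega) (by omega)
    | succ N ih =>
      intro j h1 h2
      by_cases hcase : -(p:ℤ) - N ≤ j ∧ j ≤ (p:ℤ) - 1 + N
      · exact ih j hcase.1 hcase.2
      · rcases (show j = (p:ℤ) + N ∨ j = -(p:ℤ) - N - 1 from by omega) with rfl | rfl
        · -- use recurrence at j0 = N
          have hrec := hv (N : ℤ)
          have hsplit : Finset.Icc (-(p:ℤ)) (p:ℤ)
              = insert ((p:ℤ)) (Finset.Icc (-(p:ℤ)) ((p:ℤ)-1)) := by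
            ext x
            simp only [Finset.mem_Icc, Finset.mem_insert]
            omega
          rw [hsplit, Finset.sum_insert (by simp only [Finset.mem_Icc]; omega)] at hrec
          have hzs : ∀ t ∈ Finset.Icc (-(p:ℤ)) ((p:ℤ)-1), (a t : ℂ) * v ((N:ℤ) + t) = 0 := by
            intro t ht
            simp only [Finset.mem_Icc] at ht
            rw [ih ((N:ℤ)+t) (by omega) (by omega), mul_zero]
          rw [Finset.sum_eq_zero hzs, ih (N:ℤ) (by omega) (by omega), add_zero, mul_zero,
            add_zero] at hrec
          have := mul_eq_zero.mp hrec
          rcases this with h | h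
          · exact absurd h hap'
          · rw [show (p:ℤ) + (N:ℤ) = (N:ℤ) + (p:ℤ) from by ring]
            exact h
        · -- use recurrence at j0 = -N-1
          have hrec := hv (-(N:ℤ) - 1)
          have hsplit : Finset.Icc (-(p:ℤ)) (p:ℤ)
              = insert (-(p:ℤ)) (Finset.Icc (-(p:ℤ)+1) ((p:ℤ))) := by
            ext x
            simp only [Finset.mem_Icc, Finset.mem_insert]
            omega
          rw [hsplit, Finset.sum_insert (by simp only [Finset.mem_Icc]; omega)] at hrec
          have hzs : ∀ t ∈ Finset.Icc (-(p:ℤ)+1) ((p:ℤ)), (a t : ℂ) * v (-(N:ℤ) - 1 + t) = 0 := by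
            intro t ht
            simp only [Finset.mem_Icc] at ht
            rw [ih (-(N:ℤ)-1+t) (by omega) (by omega), mul_zero]
          rw [Finset.sum_eq_zero hzs, ih (-(N:ℤ)-1) (by omega) (by omega), add_zero, mul_zero,
            add_zero] at hrec
          rw [hsym (p:ℤ)] at hrec
          have := mul_eq_zero.mp hrec
          rcases this with h | h
          · exact absurd h hap'
          · rw [show -(p:ℤ) - (N:ℤ) - 1 = -(N:ℤ) - 1 + -(p:ℤ) from by ring]
            exact h
  intro j
  exact key (j.natAbs + p) j (by omega) (by omega)

lemma vand_solve (n : ℕ) (w : Fin n → ℂ) (hw : Function.Injective w) (b : Fin n → ℂ) :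
    ∃ u : Fin n → ℂ, ∀ i : Fin n, ∑ s, u s * w s ^ (i : ℕ) = b i := by
  classical
  set A : Matrix (Fin n) (Fin n) ℂ := Matrix.of (fun i s => w s ^ (i : ℕ)) with hA
  have hdet : A.det ≠ 0 := by
    have hAt : A = (Matrix.vandermonde w).transpose := by
      ext i s
      rfl
    rw [hAt, Matrix.det_transpose, Matrix.det_vandermonde]
    rw [Finset.prod_ne_zero_iff]
    intro i _
    rw [Finset.prod_ne_zero_iff]
    intro j hj
    have : i ≠ j := by
      intro hij
      subst hij
      exact absurd (Finset.mem_Ioi.mp hj) (lt_irrefl _)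
    exact sub_ne_zero.mpr (fun hc => this (hw hc.symm))
  have hunit : IsUnit A.det := isUnit_iff_ne_zero.mpr hdet
  refine ⟨A⁻¹.mulVec b, fun i => ?_⟩
  have : A.mulVec (A⁻¹.mulVec b) = b := by
    rw [Matrix.mulVec_mulVec, Matrix.mul_nonsing_inv A hunit, Matrix.one_mulVec]
  have hi := congrFun this i
  rw [Matrix.mulVec, dotProduct] at hi
  rw [← hi]
  refine Finset.sum_congr rfl fun s _ => ?_
  rw [hA]
  simp [mul_comm]

lemma comb_sol {ι : Type*} [Fintype ι] (p : ℕ) (a : ℤ → ℝ) (lam : ℂ)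
    (u : ι → ℂ) (hu : ∀ s, u s ≠ 0)
    (hroot : ∀ s, lam + ∑ t ∈ Finset.Icc (-(p:ℤ)) (p:ℤ), (a t : ℂ) * u s ^ t = 0)
    (κ : ι → ℂ) (j : ℤ) :
    (∑ t ∈ Finset.Icc (-(p:ℤ)) (p:ℤ), (a t : ℂ) * (∑ s, κ s * u s ^ (j+t)))
      + lam * (∑ s, κ s * u s ^ j) = 0 := by
  have hswap : ∑ t ∈ Finset.Icc (-(p:ℤ)) (p:ℤ), (a t : ℂ) * (∑ s, κ s * u s ^ (j+t))
      = ∑ s, κ s * ∑ t ∈ Finset.Icc (-(p:ℤ)) (p:ℤ), (a t : ℂ) * u s ^ (j+t) := by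
    rw [Finset.sum_congr rfl (fun t _ => Finset.mul_sum _ _ _), Finset.sum_comm]
    refine Finset.sum_congr rfl fun s _ => ?_
    rw [Finset.mul_sum]
    exact Finset.sum_congr rfl fun t _ => by ring
  rw [hswap, Finset.mul_sum, ← Finset.sum_add_distrib]
  refine Finset.sum_eq_zero fun s _ => ?_
  have h1 := geom_sol p a lam (u s) (hu s) (hroot s) j
  linear_combination (κ s) * h1


/-- if `P_p(·;λ)` has `p` distinct roots `z_r ≠ ±2`, and `y_r + y_r⁻¹ = z_r`
with `y_r ≠ 0`, then `v` solves `L_p v + λ v = 0` iff `v` is a linear combination of the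
sequences `(y_r^j)` and `(y_r^{-j})`. -/
theorem stmt0 (p : ℕ) (hp : 1 ≤ p) (h : ℝ) (hh : 0 < h)
    (a : ℤ → ℝ) (hsym : ∀ r : ℤ, a (-r) = a r) (hap : a p ≠ 0)
    (lam : ℂ) (z : Fin p → ℂ) (hz : Function.Injective z)
    (hroot : ∀ r, Ppoly p a lam (z r) = 0)
    (hz2 : ∀ r, z r ≠ 2) (hz2' : ∀ r, z r ≠ -2)
    (y : Fin p → ℂ) (hy0 : ∀ r, y r ≠ 0) (hyz : ∀ r, y r + (y r)⁻¹ = z r)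
    (v : ℤ → ℂ) :
    (∀ j : ℤ, (∑ r ∈ Finset.Icc (-(p : ℤ)) (p : ℤ), (a r : ℂ) * v (j + r)) + lam * v j = 0) ↔
    (∃ c d : Fin p → ℂ, ∀ j : ℤ,
      v j = ∑ r, (c r * (y r) ^ j + d r * (y r) ^ (-j))) := by
  have hroot' : ∀ r : Fin p,
      lam + ∑ t ∈ Finset.Icc (-(p:ℤ)) (p:ℤ), (a t : ℂ) * (y r) ^ t = 0 := by
    intro r
    have hA := lemA a hsym lam p hp (y r) (hy0 r)
    rw [hyz r, hroot r] at hA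
    exact hA.symm
  have hrootinv : ∀ r : Fin p,
      lam + ∑ t ∈ Finset.Icc (-(p:ℤ)) (p:ℤ), (a t : ℂ) * ((y r)⁻¹) ^ t = 0 := by
    intro r
    rw [S_inv p a hsym]
    exact hroot' r
  -- y r is not ±1
  have hy1 : ∀ r, y r ≠ 1 := by
    intro r hc
    apply hz2 r
    rw [← hyz r, hc]
    norm_num
  have hy1' : ∀ r, y r ≠ -1 := by
    intro r hc
    apply hz2' r
    rw [← hyz r, hc]
    norm_num
  -- the 2p geometric ratios
  set w : Fin p ⊕ Fin p → ℂ := Sum.elim y (fun r => (y r)⁻¹) with hwdef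
  have hw0 : ∀ s, w s ≠ 0 := by
    rintro (r | r)
    · exact hy0 r
    · exact inv_ne_zero (hy0 r)
  have hwroot : ∀ s, lam + ∑ t ∈ Finset.Icc (-(p:ℤ)) (p:ℤ), (a t : ℂ) * (w s) ^ t = 0 := by
    rintro (r | r)
    · exact hroot' r
    · exact hrootinv r
  have hzinj : ∀ r s : Fin p, y r + (y r)⁻¹ = y s + (y s)⁻¹ → r = s := by
    intro r s hrs
    apply hz
    rw [← hyz r, ← hyz s, hrs]
  have hself : ∀ r : Fin p, y r ≠ (y r)⁻¹ := by
    intro r hc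
    have h2 : (y r)^2 = 1 := by
      rw [sq]
      nth_rewrite 2 [hc]
      rw [mul_inv_cancel₀ (hy0 r)]
    rcases mul_eq_zero.mp (show (y r - 1) * (y r + 1) = 0 from by linear_combination h2) with h1 | h1
    · exact hy1 r (by linear_combination h1)
    · exact hy1' r (by linear_combination h1)
  have hwinj : Function.Injective w := by
    rintro (r | r) (s | s) hr
    · simp only [hwdef, Sum.elim_inl] at hr
      rw [hzinj r s (by rw [hr])]
    · simp only [hwdef, Sum.elim_inl, Sum.elim_inr] at hr
      have hrs : r = s := by
        apply hzinj
        rw [hr, inv_inv, add_comm]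
      subst hrs
      exact absurd hr (hself r)
    · simp only [hwdef, Sum.elim_inl, Sum.elim_inr] at hr
      have hrs : r = s := by
        apply hzinj
        rw [← hr, inv_inv, add_comm]
      subst hrs
      exact absurd hr.symm (hself r)
    · simp only [hwdef, Sum.elim_inr] at hr
      rw [hzinj r s (by rw [inv_inj.mp hr])]
  constructor
  · -- recurrence ⇒ representation
    intro hv
    have hVinj : Function.Injective (fun i : Fin (p+p) => w (finSumFinEquiv.symm i)) :=
      hwinj.comp finSumFinEquiv.symm.injective
    obtain ⟨u, hu⟩ := vand_solve (p+p) (fun i => w (finSumFinEquiv.symm i)) hVinj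
      (fun i => v ((i:ℤ) - (p:ℤ)))
    set κ : Fin p ⊕ Fin p → ℂ := fun s => u (finSumFinEquiv s) * (w s) ^ (p:ℤ) with hκdef
    set G : ℤ → ℂ := fun j => ∑ s, κ s * w s ^ j with hGdef
    have hmatch : ∀ j : ℤ, -(p:ℤ) ≤ j → j ≤ (p:ℤ)-1 → G j = v j := by
      intro j hj1 hj2
      have hi0 : ((j + p).toNat) < p + p := by omega
      have hui := hu ⟨(j+p).toNat, hi0⟩
      have hival : (((⟨(j+p).toNat, hi0⟩ : Fin (p+p)) : ℕ) : ℤ) = j + p := by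
        simp only []
        omega
      rw [show ((((⟨(j+p).toNat, hi0⟩ : Fin (p+p)) : ℕ) : ℤ)) - (p:ℤ) = j from by omega] at hui
      rw [← hui]
      show (∑ s : Fin p ⊕ Fin p, κ s * w s ^ j) = _
      rw [← Equiv.sum_comp finSumFinEquiv.symm (fun s => κ s * w s ^ j)]
      refine Finset.sum_congr rfl fun i' _ => ?_
      simp only [hκdef, Equiv.apply_symm_apply]
      rw [mul_assoc, ← zpow_add₀ (hw0 _)]
      congr 1
      rw [← zpow_natCast (w (finSumFinEquiv.symm i'))]
      congr 1
      omega
    have hGsol : ∀ j : ℤ,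
        (∑ t ∈ Finset.Icc (-(p:ℤ)) (p:ℤ), (a t : ℂ) * G (j + t)) + lam * G j = 0 := by
      intro j
      exact comb_sol p a lam w hw0 hwroot κ j
    have hdiff : ∀ j : ℤ, v j - G j = 0 := by
      apply vanish p hp a hsym hap lam
      · intro j
        have h1 := hv j
        have h2 := hGsol j
        have hsplit : ∑ t ∈ Finset.Icc (-(p:ℤ)) (p:ℤ), (a t : ℂ) * (v (j+t) - G (j+t))
            = (∑ t ∈ Finset.Icc (-(p:ℤ)) (p:ℤ), (a t : ℂ) * v (j+t))
              - ∑ t ∈ Finset.Icc (-(p:ℤ)) (p:ℤ), (a t : ℂ) * G (j+t) := by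
          rw [← Finset.sum_sub_distrib]
          exact Finset.sum_congr rfl fun t _ => by ring
        rw [hsplit]
        linear_combination h1 - h2
      · intro j hj1 hj2
        rw [hmatch j hj1 hj2]
        ring
    refine ⟨fun r => κ (Sum.inl r) , fun r => κ (Sum.inr r), ?_⟩
    intro j
    have hvG : v j = G j := sub_eq_zero.mp (hdiff j)
    calc v j = ∑ s : Fin p ⊕ Fin p, κ s * w s ^ j := hvG
      _ = (∑ r, κ (Sum.inl r) * w (Sum.inl r) ^ j)
            + ∑ r, κ (Sum.inr r) * w (Sum.inr r) ^ j :=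
          Fintype.sum_sum_type _
      _ = ∑ r, (κ (Sum.inl r) * y r ^ j + κ (Sum.inr r) * y r ^ (-j)) := by
          rw [← Finset.sum_add_distrib]
          refine Finset.sum_congr rfl fun r _ => ?_
          simp only [hwdef, Sum.elim_inl, Sum.elim_inr]
          rw [inv_zpow, ← zpow_neg]
  · -- representation ⇒ recurrence
    rintro ⟨c, d, hcd⟩ j
    have hrw : ∀ i : ℤ, v i = ∑ s, (Sum.elim c d s) * w s ^ i := by
      intro i
      rw [hcd i]
      rw [Fintype.sum_sum_type (fun s : Fin p ⊕ Fin p => Sum.elim c d s * w s ^ i),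
        ← Finset.sum_add_distrib]
      refine Finset.sum_congr rfl fun r _ => ?_
      simp only [hwdef, Sum.elim_inl, Sum.elim_inr]
      rw [inv_zpow, ← zpow_neg]
    simp only [hrw]
    exact comb_sol p a lam w hw0 hwroot (Sum.elim c d) j
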